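/- Let c ∈ G and let r be an integer with 1 ≤ r ≤ row(c). Then the projection proj_r(c), defined as the unique cell j in row r with 0 ≤ g(j) - g(c) < a, lies in G. -/
import Mathlib

def g (a b : ℤ) (p : ℤ × ℤ) : ℤ := a * b - a * p.1 - b * p.2

def Gset (a b : ℤ) : Set (ℤ × ℤ) := {p | 1 ≤ p.1 ∧ 1 ≤ p.2 ∧ 0 < g a b p}

/-- If c ∈ G and 1 ≤ r ≤ row(c), then the projection of c to row r
(the unique cell j in row r with 0 ≤ g(j) - g(c) < a) lies in G. -/
theorem stmt2 (a b : ℤ) (ha : 1 < a) (hab : a < b) (hcop : IsCoprime a b)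
    (c : ℤ × ℤ) (hc : c ∈ Gset a b) (r : ℤ) (hr1 : 1 ≤ r) (hr2 : r ≤ c.2)
    (j : ℤ × ℤ) (hj : j.2 = r)
    (h1 : 0 ≤ g a b j - g a b c) (h2 : g a b j - g a b c < a) :
    j ∈ Gset a b := by
  obtain ⟨hc1, hc2, hc3⟩ := hc
  simp only [g] at *
  refine ⟨?_, by omega, by simp only [g]; linarith⟩
  -- a * j.1 = a * c.1 + b * (c.2 - r) - d with 0 ≤ d < a
  have hb0 : (0:ℤ) < b := by linarith
  have key : 1 ≤ a * j.1 := by nlinarith [mul_nonneg hb0.le (sub_nonneg.2 hr2)]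
  by_contra h
  push_neg at h
  nlinarith [mul_nonpos_of_nonneg_of_nonpos (by linarith : (0:ℤ) ≤ a) (by linarith : j.1 ≤ 0)]
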